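/- Let L be a regular language, let A be its minimum DFA, and let B be any DFA with L(B) = L. Then the equivalence relation ∼^B refines ∼^A: for all α, α' ∈ Pref(L), if α ∼^B α' then α ∼^A α'. -/
import Mathlib


/-- A deterministic finite automaton with a (possibly partial) transition function,
a unique initial state and a set of final states. -/
structure PDFA (α : Type*) (σ : Type*) where
  step : σ → α → Option σ
  start : σ
  accept : Set σ

namespace PDFA

variable {α : Type*} {σ : Type*}

/-- The transition function extended to strings (read left to right). -/
def evalFrom (M : PDFA α σ) : σ → List α → Option σ
  | q, [] => some q
  | q, a :: w =>
    match M.step q a with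
    | none => none
    | some q' => M.evalFrom q' w

/-- `δ(s, w)`. -/
def eval (M : PDFA α σ) (w : List α) : Option σ :=
  M.evalFrom M.start w

/-- The language accepted by the automaton. -/
def language (M : PDFA α σ) : Set (List α) :=
  {w | ∃ q, M.eval w = some q ∧ q ∈ M.accept}

/-- `Pref(L(M))`: the set of prefixes of accepted words. -/
def prefLang (M : PDFA α σ) : Set (List α) :=
  {w | ∃ v, w ++ v ∈ M.language}

/-- `I_q`: the words of `Pref(L(M))` reaching state `q`. -/
def I (M : PDFA α σ) (q : σ) : Set (List α) :=
  {w | w ∈ M.prefLang ∧ M.eval w = some q}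

/-- Every state is reachable from the initial state, and from every state a final
state can be reached. -/
def Trim (M : PDFA α σ) : Prop :=
  (∀ q : σ, ∃ w : List α, M.eval w = some q) ∧
  (∀ q : σ, ∃ w : List α, ∃ q' : σ, M.evalFrom q w = some q' ∧ q' ∈ M.accept)

variable [LinearOrder α]

/-- A sequence of words which is monotone (non-decreasing or non-increasing) in the
co-lexicographic order (i.e., lexicographic order of the reversed words). -/
def MonotoneColex (x : ℕ → List α) : Prop :=
  (∀ i j : ℕ, i ≤ j → (x i).reverse ≤ (x j).reverse) ∨
  (∀ i j : ℕ, i ≤ j → (x j).reverse ≤ (x i).reverse)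

/-- A set of states is entangled if a single monotone sequence of words of
`Pref(L(M))` reaches each of its states infinitely many times. -/
def EntangledStates (M : PDFA α σ) (S : Set σ) : Prop :=
  ∃ x : ℕ → List α, (∀ i, x i ∈ M.prefLang) ∧ MonotoneColex x ∧
    ∀ q ∈ S, ∀ n : ℕ, ∃ i : ℕ, n ≤ i ∧ M.eval (x i) = some q

/-- `ent(M)`: the maximum cardinality of an entangled set of states. -/
noncomputable def ent (M : PDFA α σ) [Fintype σ] : ℕ :=
  sSup {n : ℕ | ∃ S : Finset σ, S.card = n ∧ M.EntangledStates ↑S}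

/-- The strict co-lex partial order on states: `q₁ ≺ q₂` iff `q₁ ≠ q₂` and every word
reaching `q₁` is co-lexicographically smaller than every word reaching `q₂`. -/
def stateLt (M : PDFA α σ) (q₁ q₂ : σ) : Prop :=
  q₁ ≠ q₂ ∧ ∀ u ∈ M.I q₁, ∀ v ∈ M.I q₂, u.reverse < v.reverse

/-- A set of states which is an antichain for the co-lex partial order. -/
def IsColexAntichain (M : PDFA α σ) (S : Set σ) : Prop :=
  ∀ q₁ ∈ S, ∀ q₂ ∈ S, q₁ ≠ q₂ → ¬ M.stateLt q₁ q₂ ∧ ¬ M.stateLt q₂ q₁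

/-- `width(M)`: the maximum cardinality of a co-lex antichain of states. -/
noncomputable def width (M : PDFA α σ) [Fintype σ] : ℕ :=
  sSup {n : ℕ | ∃ S : Finset σ, S.card = n ∧ M.IsColexAntichain ↑S}

/-- `V` is convex in `(Pref(L(M)), ⪯)`. -/
def ConvexIn (M : PDFA α σ) (V : Set (List α)) : Prop :=
  ∀ ⦃u v w : List α⦄, u ∈ V → w ∈ V → v ∈ M.prefLang →
    u.reverse ≤ v.reverse → v.reverse ≤ w.reverse → v ∈ V

/-- A set of words `V` is entangled in `M` if some monotone sequence of elements of `V`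
passes through each state occurring in `V` infinitely many times. -/
def EntangledWords (M : PDFA α σ) (V : Set (List α)) : Prop :=
  ∃ x : ℕ → List α, (∀ i, x i ∈ V) ∧ MonotoneColex x ∧
    ∀ q : σ, (∃ w ∈ V, M.eval w = some q) →
      ∀ n : ℕ, ∃ i : ℕ, n ≤ i ∧ M.eval (x i) = some q

/-- An entangled convex (e.c.) decomposition of `M`: a partition of `Pref(L(M))` into
convex, entangled sets. -/
def IsECD (M : PDFA α σ) (V : Set (Set (List α))) : Prop :=
  (⋃₀ V) = M.prefLang ∧ V.Pairwise Disjoint ∧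
    ∀ W ∈ V, M.ConvexIn W ∧ M.EntangledWords W

/-- A minimum-size e.c. decomposition: a finite e.c. decomposition of minimum cardinality. -/
def IsMinECD (M : PDFA α σ) (V : Set (Set (List α))) : Prop :=
  V.Finite ∧ M.IsECD V ∧
    ∀ V' : Set (Set (List α)), V'.Finite → M.IsECD V' → V.ncard ≤ V'.ncard

/-- The equivalence relation `∼_𝒱`: two words are equivalent iff they reach the same state
and every element of `𝒱` lying strictly co-lexicographically between them intersects `I_q`. -/
def simV (M : PDFA α σ) (V : Set (Set (List α))) (u v : List α) : Prop :=
  M.eval u = M.eval v ∧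
  ∀ W ∈ V,
    (∀ w ∈ W, min u.reverse v.reverse < w.reverse ∧ w.reverse < max u.reverse v.reverse) →
    ∃ w ∈ W, M.eval w = M.eval u

/-- The decomposition-free characterization of `∼`: the two words reach the same state and
the co-lex interval between them is covered by finitely many convex sets, each entangled in
`M` and intersecting `I_q`. -/
def simR (M : PDFA α σ) (u v : List α) : Prop :=
  M.eval u = M.eval v ∧
  ∃ (n : ℕ) (C : Fin n → Set (List α)),
    (∀ i, C i ⊆ M.prefLang ∧ M.ConvexIn (C i) ∧ M.EntangledWords (C i) ∧
      ∃ w ∈ C i, M.eval w = M.eval u) ∧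
    ∀ w ∈ M.prefLang,
      min u.reverse v.reverse ≤ w.reverse → w.reverse ≤ max u.reverse v.reverse →
      w ∈ ⋃ i, C i

end PDFA

namespace PDFA

variable {α : Type*} {σ : Type*}

/-- The language recognized starting from state `q`. -/
def future (M : PDFA α σ) (q : σ) : Set (List α) :=
  {w | ∃ q', M.evalFrom q w = some q' ∧ q' ∈ M.accept}

theorem evalFrom_append (M : PDFA α σ) (q : σ) (u v : List α) :
    M.evalFrom q (u ++ v) = (M.evalFrom q u).bind (fun r => M.evalFrom r v) := by
  induction u generalizing q with
  | nil => simp [evalFrom]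
  | cons a u ih =>
    simp only [List.cons_append, evalFrom]
    cases M.step q a with
    | none => rfl
    | some r => exact ih r

theorem evalFrom_cons (M : PDFA α σ) (q : σ) (a : α) (w : List α) :
    M.evalFrom q (a :: w) = (M.step q a).bind (fun r => M.evalFrom r w) := by
  cases h : M.step q a <;> simp [evalFrom, h]

theorem eval_append (M : PDFA α σ) (u v : List α) :
    M.eval (u ++ v) = (M.eval u).bind (fun r => M.evalFrom r v) :=
  evalFrom_append M M.start u v

theorem exists_eval_of_mem_prefLang {M : PDFA α σ} {w : List α} (h : w ∈ M.prefLang) :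
    ∃ q, M.eval w = some q := by
  obtain ⟨v, q, hq, -⟩ := h
  rw [eval_append] at hq
  cases h' : M.eval w with
  | none => rw [h'] at hq; simp at hq
  | some q' => exact ⟨q', rfl⟩

theorem residual_eq_future {M : PDFA α σ} {w : List α} {q : σ} (h : M.eval w = some q) :
    {z | w ++ z ∈ M.language} = M.future q := by
  ext z
  have hz : M.eval (w ++ z) = M.evalFrom q z := by rw [eval_append, h]; rfl
  simp only [Set.mem_setOf_eq, language, future, hz]

theorem cons_mem_future_of_step {M : PDFA α σ} {q r : σ} {a : α} (h : M.step q a = some r)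
    (z : List α) : a :: z ∈ M.future q ↔ z ∈ M.future r := by
  simp only [future, Set.mem_setOf_eq, evalFrom, h]

theorem cons_notMem_future_of_step_none {M : PDFA α σ} {q : σ} {a : α}
    (h : M.step q a = none) (z : List α) : a :: z ∉ M.future q := by
  simp [future, evalFrom, h]

theorem nil_mem_future {M : PDFA α σ} {q : σ} : [] ∈ M.future q ↔ q ∈ M.accept := by
  simp [future, evalFrom]

theorem future_nonempty {M : PDFA α σ} (hM : M.Trim) (q : σ) : (M.future q).Nonempty := by
  obtain ⟨w, q', h1, h2⟩ := hM.2 q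
  exact ⟨w, q', h1, h2⟩

/-- In a minimum trim DFA, states with equal futures are equal. -/
theorem future_eq_imp_eq [LinearOrder α] {σ₁ : Type*} [Fintype σ₁] (A : PDFA α σ₁)
    (hA : A.Trim)
    (hmin : ∀ (m : ℕ) (D : PDFA α (Fin m)), D.Trim → D.language = A.language →
      Fintype.card σ₁ ≤ m)
    {q q' : σ₁} (h : A.future q = A.future q') : q = q' := by
  classical
  let st : Setoid σ₁ := ⟨fun a b => A.future a = A.future b,
    ⟨fun a => rfl, fun h => h.symm, fun h1 h2 => h1.trans h2⟩⟩
  letI : Fintype (Quotient st) := Fintype.ofFinite _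
  set n := Fintype.card (Quotient st) with hn
  let e : Quotient st ≃ Fin n := Fintype.equivFin _
  let f : σ₁ → Fin n := fun p => e (Quotient.mk st p)
  let out : Fin n → σ₁ := fun i => (e.symm i).out
  have hout : ∀ i, f (out i) = i := by
    intro i
    show e (Quotient.mk st (e.symm i).out) = i
    rw [Quotient.out_eq, Equiv.apply_symm_apply]
  have hfut : ∀ p, A.future (out (f p)) = A.future p := by
    intro p
    have : Quotient.mk st (out (f p)) = Quotient.mk st p := by
      show Quotient.mk st (e.symm (e (Quotient.mk st p))).out = _
      rw [Quotient.out_eq, Equiv.symm_apply_apply]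
    exact Quotient.exact this
  -- well-definedness of the quotient step
  have wd : ∀ p p' : σ₁, A.future p = A.future p' → ∀ a : α,
      (A.step p a).map f = (A.step p' a).map f := by
    intro p p' hpp a
    cases h1 : A.step p a with
    | none =>
      cases h2 : A.step p' a with
      | none => rfl
      | some r' =>
        obtain ⟨z, hz⟩ := future_nonempty hA r'
        have : a :: z ∈ A.future p := by
          rw [hpp]; exact (cons_mem_future_of_step h2 z).mpr hz
        exact absurd this (cons_notMem_future_of_step_none h1 z)
    | some r =>
      cases h2 : A.step p' a with
      | none =>
        obtain ⟨z, hz⟩ := future_nonempty hA r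
        have : a :: z ∈ A.future p' := by
          rw [← hpp]; exact (cons_mem_future_of_step h1 z).mpr hz
        exact absurd this (cons_notMem_future_of_step_none h2 z)
      | some r' =>
        have : A.future r = A.future r' := by
          ext z
          rw [← cons_mem_future_of_step h1 z, hpp, cons_mem_future_of_step h2 z]
        simp only [Option.map_some]
        exact congrArg some (congrArg e (Quotient.sound this))
  -- the quotient automaton
  let D : PDFA α (Fin n) :=
    { step := fun i a => (A.step (out i) a).map f
      start := f A.start
      accept := {i | out i ∈ A.accept} }
  have hstep : ∀ (p : σ₁) (a : α), D.step (f p) a = (A.step p a).map f := by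
    intro p a
    exact wd (out (f p)) p (hfut p) a
  have heval : ∀ (w : List α) (p : σ₁), D.evalFrom (f p) w = (A.evalFrom p w).map f := by
    intro w
    induction w with
    | nil => intro p; rfl
    | cons a w ih =>
      intro p
      rw [evalFrom_cons, evalFrom_cons, hstep p a]
      cases A.step p a with
      | none => rfl
      | some r => simpa using ih r
  have hacc : ∀ p : σ₁, f p ∈ D.accept ↔ p ∈ A.accept := by
    intro p
    show out (f p) ∈ A.accept ↔ p ∈ A.accept
    rw [← nil_mem_future, ← nil_mem_future, hfut p]
  have hlang : D.language = A.language := by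
    ext w
    simp only [language, Set.mem_setOf_eq]
    constructor
    · rintro ⟨i, h1, h2⟩
      have hDe : D.eval w = (A.eval w).map f := heval w A.start
      rw [hDe] at h1
      cases hq : A.eval w with
      | none => rw [hq] at h1; simp at h1
      | some p =>
        rw [hq] at h1
        simp only [Option.map_some, Option.some.injEq] at h1
        exact ⟨p, rfl, (hacc p).mp (h1 ▸ h2)⟩
    · rintro ⟨p, h1, h2⟩
      refine ⟨f p, ?_, (hacc p).mpr h2⟩
      have hDe : D.eval w = (A.eval w).map f := heval w A.start
      rw [hDe, h1]; rfl
  have hDtrim : D.Trim := by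
    constructor
    · intro i
      obtain ⟨w, hw⟩ := hA.1 (out i)
      refine ⟨w, ?_⟩
      have hDe : D.eval w = (A.eval w).map f := heval w A.start
      rw [hDe, hw]
      simp [hout i]
    · intro i
      obtain ⟨w, q'', h1, h2⟩ := hA.2 (out i)
      refine ⟨w, f q'', ?_, ?_⟩
      · have : D.evalFrom (f (out i)) w = (A.evalFrom (out i) w).map f := heval w (out i)
        rw [hout i] at this
        rw [this, h1]; rfl
      · exact (hacc q'').mpr h2
  have hcard : Fintype.card σ₁ ≤ n := hmin n D hDtrim hlang
  have hcard2 : n ≤ Fintype.card σ₁ := Fintype.card_le_of_surjective (Quotient.mk st)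
    (fun x => Quotient.exists_rep x)
  have hsurj : Function.Surjective (Quotient.mk st) := fun x => Quotient.exists_rep x
  have hbij : Function.Bijective (Quotient.mk st) :=
    (Fintype.bijective_iff_surjective_and_card _).mpr ⟨hsurj, (le_antisymm hcard hcard2).trans hn⟩
  exact hbij.injective (Quotient.sound h)

end PDFA

/-- Lemma: if `A` is the minimum DFA of `L` and `B` any DFA recognizing `L`, then the
relation `∼^B` refines `∼^A`. -/
theorem simR_of_dfa_refines_simR_of_minimum {α : Type*} [LinearOrder α] {σ₁ σ₂ : Type*}
    [Fintype σ₁] [Fintype σ₂] (A : PDFA α σ₁) (hA : A.Trim)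
    (hmin : ∀ (m : ℕ) (D : PDFA α (Fin m)), D.Trim → D.language = A.language →
      Fintype.card σ₁ ≤ m)
    (B : PDFA α σ₂) (hB : B.Trim) (hL : B.language = A.language) :
    ∀ u v : List α, u ∈ A.prefLang → v ∈ A.prefLang →
      B.simR u v → A.simR u v := by
  intro u v hu hv hBuv
  have hpref : B.prefLang = A.prefLang := by
    unfold PDFA.prefLang
    rw [hL]
  -- words with equal residuals reach the same state of A
  have key : ∀ w w' : List α, w ∈ A.prefLang → w' ∈ A.prefLang →
      {z | w ++ z ∈ A.language} = {z | w' ++ z ∈ A.language} → A.eval w = A.eval w' := by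
    intro w w' hw hw' hres
    obtain ⟨p, hp⟩ := PDFA.exists_eval_of_mem_prefLang hw
    obtain ⟨p', hp'⟩ := PDFA.exists_eval_of_mem_prefLang hw'
    rw [hp, hp']
    refine congrArg some (PDFA.future_eq_imp_eq A hA hmin ?_)
    rw [← PDFA.residual_eq_future hp, ← PDFA.residual_eq_future hp', hres]
  -- words reaching the same state of B reach the same state of A
  have keyB : ∀ w w' : List α, w ∈ A.prefLang → w' ∈ A.prefLang →
      B.eval w = B.eval w' → A.eval w = A.eval w' := by
    intro w w' hw hw' hBe
    obtain ⟨q, hq⟩ := PDFA.exists_eval_of_mem_prefLang (show w ∈ B.prefLang from hpref ▸ hw)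
    have hq' : B.eval w' = some q := by rw [← hBe, hq]
    refine key w w' hw hw' ?_
    have h1 : {z | w ++ z ∈ B.language} = B.future q := PDFA.residual_eq_future hq
    have h2 : {z | w' ++ z ∈ B.language} = B.future q := PDFA.residual_eq_future hq'
    rw [hL] at h1 h2
    rw [h1, h2]
  obtain ⟨hBe, n, C, hC, hcov⟩ := hBuv
  refine ⟨keyB u v hu hv hBe, n, C, ?_, ?_⟩
  · intro i
    obtain ⟨hsub, hconv, hent, w₀, hw₀C, hw₀ev⟩ := hC i
    have hsubA : C i ⊆ A.prefLang := hpref ▸ hsub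
    refine ⟨hsubA, ?_, ?_, ?_⟩
    · -- convexity
      intro x y z hx hz hy h1 h2
      exact hconv hx hz (hpref ▸ hy) h1 h2
    · -- entanglement in A
      obtain ⟨x, hx1, hx2, hx3⟩ := hent
      refine ⟨x, hx1, hx2, ?_⟩
      rintro p ⟨w, hwC, hwev⟩ n0
      obtain ⟨qB, hqB⟩ := PDFA.exists_eval_of_mem_prefLang
        (show w ∈ B.prefLang from hsub hwC)
      obtain ⟨i', hi', hxi⟩ := hx3 qB ⟨w, hwC, hqB⟩ n0
      refine ⟨i', hi', ?_⟩
      have : A.eval (x i') = A.eval w :=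
        keyB (x i') w (hsubA (hx1 i')) (hsubA hwC) (by rw [hxi, hqB])
      rw [this, hwev]
    · -- intersects I_{A.eval u}
      refine ⟨w₀, hw₀C, ?_⟩
      exact keyB w₀ u (hsubA hw₀C) hu hw₀ev
  · intro w hw h1 h2
    exact hcov w (hpref ▸ hw) h1 h2
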